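/- Let (β,γ) be antiferromagnetic, λ > 0 and δ ∈ (0, |ω*|/100). There exists τ₀ > 0 such that for every τ ∈ (0,τ₀) the following holds: if R₁,…,R_k ∈ [x* − τ, x* + τ] are such that every point of [x* − τ, x* + τ] is within distance τδ of some R_i, then, setting I := [x* − |ω*|τ/2, x* + |ω*|τ/2], for every x₁, x₂ ∈ I with |x₁ − x₂| ≤ |ω*|τδ/2 there exists i ∈ {1,…,k} such that both x₁ and x₂ lie in φ_{R_i}(I), the image of I under φ_{R_i}. -/

import Mathlib

/-- `(β, γ)` is antiferromagnetic: both are nonnegative, `βγ < 1`, and not both are zero. -/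
def Antiferro (β γ : ℝ) : Prop :=
  0 ≤ β ∧ 0 ≤ γ ∧ β * γ < 1 ∧ (β ≠ 0 ∨ γ ≠ 0)

/-- For `βγ ≠ 1` and `R > 0`, `ω(R) := (1 + βγ − βR − γ/R)/(1 − βγ)`. -/
noncomputable def omegaFun (β γ R : ℝ) : ℝ := (1 + β * γ - β * R - γ / R) / (1 - β * γ)

/-- The map `φ_ρ(R) := (1 + γλρR)/(β + λρR)`. -/
noncomputable def phiMap (β γ lam p R : ℝ) : ℝ :=
  (1 + γ * lam * (p * R)) / (β + lam * (p * R))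

theorem coreA (β γ lam xs w τ c r u : ℝ) (hβ : 0 ≤ β) (hγ : 0 ≤ γ)
    (hlam : 0 < lam) (hxs : 0 < xs) (hγx : γ < xs)
    (hwD : w * (β + lam * xs ^ 2) = lam * xs * (xs - γ))
    (hw0 : 0 < w) (hw1 : w < 1) (hτ0 : 0 < τ) (hτx : τ ≤ xs/2)
    (hττ : 5 * lam * xs * τ ≤ (β + lam * xs ^ 2) * w ^ 2)
    (hc : c = w * τ / 2)
    (hs : |r - xs| ≤ τ) (hu : |u| ≤ c)
    (hsu : |w * (r - xs) + u| ≤ (3/200) * w ^ 2 * τ) :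
    u * (β + lam * (r * (xs - c))) ≤
      lam * (xs - γ) * (xs ^ 2 - r * (xs - c)) := by
  obtain ⟨s, rfl⟩ : ∃ s, r = xs + s := ⟨r - xs, by ring⟩
  simp only [add_sub_cancel_left] at hs hsu
  have hc0 : 0 < c := by rw [hc]; positivity
  have hcτ : c ≤ τ / 2 := by
    rw [hc]; linarith [mul_nonneg hτ0.le (by linarith : (0:ℝ) ≤ 1 - w)]
  have hD0 : 0 < β + lam * xs ^ 2 := by positivity
  obtain ⟨hs1, hs2⟩ := abs_le.1 hs
  obtain ⟨hu1, hu2⟩ := abs_le.1 hu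
  obtain ⟨hsu1, hsu2⟩ := abs_le.1 hsu
  have expand : lam * (xs - γ) * (xs ^ 2 - (xs + s) * (xs - c))
        - u * (β + lam * ((xs + s) * (xs - c)))
      = (β + lam * xs ^ 2) * (w * c - w * s - u) + lam * (xs - γ) * s * c
        + u * lam * (xs * (c - s) + s * c) := by
    linear_combination (s - c) * hwD
  have e0 : 0 ≤ lam * γ * c := by positivity
  have e1 : 0 ≤ lam * (xs - γ) * c :=
    mul_nonneg (mul_nonneg hlam.le (by linarith)) hc0.le
  have e2 : lam * (xs - γ) * c ≤ lam * xs * τ / 2 := by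
    linarith [mul_nonneg (mul_nonneg hlam.le hxs.le) (by linarith : (0:ℝ) ≤ τ/2 - c), e0]
  have b1 : (97/200) * ((β + lam * xs ^ 2) * (w ^ 2 * τ)) ≤
      (β + lam * xs ^ 2) * (w * c - w * s - u) := by
    have h : (97/200) * (w ^ 2 * τ) ≤ w * c - w * s - u := by
      rw [hc]; linarith
    linarith [mul_le_mul_of_nonneg_left h hD0.le]
  have b2 : -(lam * xs * τ ^ 2 / 2) ≤ lam * (xs - γ) * s * c := by
    linarith [mul_nonneg e1 (by linarith : (0:ℝ) ≤ s + τ),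
      mul_le_mul_of_nonneg_right e2 hτ0.le]
  have q1 : 0 ≤ xs * (τ/2 - c) := mul_nonneg hxs.le (by linarith)
  have q2 : 0 ≤ xs * (τ + s) := mul_nonneg hxs.le (by linarith)
  have q3 : 0 ≤ xs * (τ - s) := mul_nonneg hxs.le (by linarith)
  have q4 : 0 ≤ (τ - s) * c := mul_nonneg (by linarith) hc0.le
  have q5 : 0 ≤ (s + τ) * c := mul_nonneg (by linarith) hc0.le
  have q6 : 0 ≤ (xs/2 - τ) * τ := mul_nonneg (by linarith) hτ0.le
  have q7 : 0 ≤ τ * (τ/2 - c) := mul_nonneg hτ0.le (by linarith)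
  have hQu : xs * (c - s) + s * c ≤ 2 * xs * τ := by
    linarith [mul_pos hxs hτ0]
  have hQl : -(2 * xs * τ) ≤ xs * (c - s) + s * c := by
    linarith [mul_nonneg hxs.le hc0.le]
  have huQ : -(c * (2 * xs * τ)) ≤ u * (xs * (c - s) + s * c) := by
    linarith [mul_nonneg (by linarith : (0:ℝ) ≤ c - u) (by linarith : (0:ℝ) ≤ 2*xs*τ - (xs*(c-s)+s*c)),
      mul_nonneg (by linarith : (0:ℝ) ≤ c + u) (by linarith : (0:ℝ) ≤ (xs*(c-s)+s*c) + 2*xs*τ)]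
  have b3 : -(lam * (xs * τ ^ 2)) ≤ u * lam * (xs * (c - s) + s * c) := by
    have h := mul_le_mul_of_nonneg_left huQ hlam.le
    linarith [h, mul_nonneg (mul_nonneg (mul_nonneg hlam.le hxs.le) hτ0.le)
      (by linarith : (0:ℝ) ≤ τ/2 - c)]
  have hfin : lam * (xs * τ ^ 2) ≤ (β + lam * xs ^ 2) * (w ^ 2 * τ) / 5 := by
    linarith [mul_le_mul_of_nonneg_right hττ hτ0.le]
  have hX : 0 ≤ (β + lam * xs ^ 2) * (w ^ 2 * τ) := by positivity
  linarith [expand, b1, b2, b3, hfin, hX]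

theorem coreB (β γ lam xs w τ c r u : ℝ) (hβ : 0 ≤ β) (hγ : 0 ≤ γ)
    (hlam : 0 < lam) (hxs : 0 < xs) (hγx : γ < xs)
    (hwD : w * (β + lam * xs ^ 2) = lam * xs * (xs - γ))
    (hw0 : 0 < w) (hw1 : w < 1) (hτ0 : 0 < τ) (hτx : τ ≤ xs/2)
    (hττ : 5 * lam * xs * τ ≤ (β + lam * xs ^ 2) * w ^ 2)
    (hc : c = w * τ / 2)
    (hs : |r - xs| ≤ τ) (hu : |u| ≤ c)
    (hsu : |w * (r - xs) + u| ≤ (3/200) * w ^ 2 * τ) :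
    lam * (xs - γ) * (xs ^ 2 - r * (xs + c)) ≤
      u * (β + lam * (r * (xs + c))) := by
  obtain ⟨s, rfl⟩ : ∃ s, r = xs + s := ⟨r - xs, by ring⟩
  simp only [add_sub_cancel_left] at hs hsu
  have hc0 : 0 < c := by rw [hc]; positivity
  have hcτ : c ≤ τ / 2 := by
    rw [hc]; linarith [mul_nonneg hτ0.le (by linarith : (0:ℝ) ≤ 1 - w)]
  have hD0 : 0 < β + lam * xs ^ 2 := by positivity
  obtain ⟨hs1, hs2⟩ := abs_le.1 hs
  obtain ⟨hu1, hu2⟩ := abs_le.1 hu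
  obtain ⟨hsu1, hsu2⟩ := abs_le.1 hsu
  have expand : u * (β + lam * ((xs + s) * (xs + c)))
        - lam * (xs - γ) * (xs ^ 2 - (xs + s) * (xs + c))
      = (β + lam * xs ^ 2) * (w * c + w * s + u) + lam * (xs - γ) * s * c
        + u * lam * (xs * (s + c) + s * c) := by
    linear_combination -(s + c) * hwD
  have e0 : 0 ≤ lam * γ * c := by positivity
  have e1 : 0 ≤ lam * (xs - γ) * c :=
    mul_nonneg (mul_nonneg hlam.le (by linarith)) hc0.le
  have e2 : lam * (xs - γ) * c ≤ lam * xs * τ / 2 := by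
    linarith [mul_nonneg (mul_nonneg hlam.le hxs.le) (by linarith : (0:ℝ) ≤ τ/2 - c), e0]
  have b1 : (97/200) * ((β + lam * xs ^ 2) * (w ^ 2 * τ)) ≤
      (β + lam * xs ^ 2) * (w * c + w * s + u) := by
    have h : (97/200) * (w ^ 2 * τ) ≤ w * c + w * s + u := by
      rw [hc]; linarith
    linarith [mul_le_mul_of_nonneg_left h hD0.le]
  have b2 : -(lam * xs * τ ^ 2 / 2) ≤ lam * (xs - γ) * s * c := by
    linarith [mul_nonneg e1 (by linarith : (0:ℝ) ≤ s + τ),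
      mul_le_mul_of_nonneg_right e2 hτ0.le]
  have q1 : 0 ≤ xs * (τ/2 - c) := mul_nonneg hxs.le (by linarith)
  have q2 : 0 ≤ xs * (τ + s) := mul_nonneg hxs.le (by linarith)
  have q3 : 0 ≤ xs * (τ - s) := mul_nonneg hxs.le (by linarith)
  have q4 : 0 ≤ (τ - s) * c := mul_nonneg (by linarith) hc0.le
  have q5 : 0 ≤ (s + τ) * c := mul_nonneg (by linarith) hc0.le
  have q6 : 0 ≤ (xs/2 - τ) * τ := mul_nonneg (by linarith) hτ0.le
  have q7 : 0 ≤ τ * (τ/2 - c) := mul_nonneg hτ0.le (by linarith)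
  have hQu : xs * (s + c) + s * c ≤ 2 * xs * τ := by
    linarith [mul_pos hxs hτ0]
  have hQl : -(2 * xs * τ) ≤ xs * (s + c) + s * c := by
    linarith [mul_nonneg hxs.le hc0.le]
  have huQ : -(c * (2 * xs * τ)) ≤ u * (xs * (s + c) + s * c) := by
    linarith [mul_nonneg (by linarith : (0:ℝ) ≤ c - u) (by linarith : (0:ℝ) ≤ 2*xs*τ - (xs*(s+c)+s*c)),
      mul_nonneg (by linarith : (0:ℝ) ≤ c + u) (by linarith : (0:ℝ) ≤ (xs*(s+c)+s*c) + 2*xs*τ)]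
  have b3 : -(lam * (xs * τ ^ 2)) ≤ u * lam * (xs * (s + c) + s * c) := by
    have h := mul_le_mul_of_nonneg_left huQ hlam.le
    linarith [h, mul_nonneg (mul_nonneg (mul_nonneg hlam.le hxs.le) hτ0.le)
      (by linarith : (0:ℝ) ≤ τ/2 - c)]
  have hfin : lam * (xs * τ ^ 2) ≤ (β + lam * xs ^ 2) * (w ^ 2 * τ) / 5 := by
    linarith [mul_le_mul_of_nonneg_right hττ hτ0.le]
  have hX : 0 ≤ (β + lam * xs ^ 2) * (w ^ 2 * τ) := by positivity
  linarith [expand, b1, b2, b3, hfin, hX]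

/-- Let `(β,γ)` be antiferromagnetic, `λ > 0`, `x*` the unique positive
fixpoint of `x ↦ (1 + γλx²)/(β + λx²)` with `ω* = ω(x*)`, and `δ ∈ (0, |ω*|/100)`.  There
exists `τ₀ > 0` such that for all `τ ∈ (0,τ₀)`:  whenever `R₁,…,R_k ∈ [x*−τ, x*+τ]` is a
family such that every point of `[x*−τ, x*+τ]` is within `τδ` of some `Rᵢ`, then, with
`I := [x* − |ω*|τ/2, x* + |ω*|τ/2]`, every `x₁, x₂ ∈ I` with `|x₁ − x₂| ≤ |ω*|τδ/2` both
lie in `φ_{Rᵢ}(I)` for some `i`. -/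
theorem wellCovered (β γ lam xs δ : ℝ) (hanti : Antiferro β γ) (hlam : 0 < lam)
    (hxs : 0 < xs) (hfix : xs = (1 + γ * lam * xs ^ 2) / (β + lam * xs ^ 2))
    (hδ : δ ∈ Set.Ioo 0 (|omegaFun β γ xs| / 100)) :
    ∃ τ₀ : ℝ, 0 < τ₀ ∧ ∀ τ ∈ Set.Ioo (0 : ℝ) τ₀, ∀ (k : ℕ) (R : Fin k → ℝ),
      (∀ i, R i ∈ Set.Icc (xs - τ) (xs + τ)) →
      (∀ x ∈ Set.Icc (xs - τ) (xs + τ), ∃ i, |x - R i| ≤ τ * δ) →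
      ∀ x₁ ∈ Set.Icc (xs - |omegaFun β γ xs| * τ / 2) (xs + |omegaFun β γ xs| * τ / 2),
      ∀ x₂ ∈ Set.Icc (xs - |omegaFun β γ xs| * τ / 2) (xs + |omegaFun β γ xs| * τ / 2),
        |x₁ - x₂| ≤ |omegaFun β γ xs| * τ * δ / 2 →
        ∃ i, x₁ ∈ phiMap β γ lam (R i) ''
                Set.Icc (xs - |omegaFun β γ xs| * τ / 2) (xs + |omegaFun β γ xs| * τ / 2) ∧
             x₂ ∈ phiMap β γ lam (R i) ''
                Set.Icc (xs - |omegaFun β γ xs| * τ / 2) (xs + |omegaFun β γ xs| * τ / 2) := by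
  obtain ⟨hβ, hγ, hβγ, hne⟩ := hanti
  obtain ⟨hδ0, hδw⟩ := hδ
  have hD0 : 0 < β + lam * xs ^ 2 := by positivity
  have hfix' : xs * (β + lam * xs ^ 2) = 1 + γ * lam * xs ^ 2 := by
    field_simp at hfix; linarith [hfix]
  have hγx : γ < xs := by nlinarith [mul_pos hlam (mul_pos hxs hxs)]
  obtain ⟨w, hwdef⟩ : ∃ w : ℝ, w = lam * xs * (xs - γ) / (β + lam * xs ^ 2) := ⟨_, rfl⟩
  have hwD : w * (β + lam * xs ^ 2) = lam * xs * (xs - γ) := by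
    rw [hwdef]; exact div_mul_cancel₀ _ hD0.ne'
  have hw0 : 0 < w := by
    rw [hwdef]; exact div_pos (mul_pos (mul_pos hlam hxs) (by linarith)) hD0
  have hw1 : w < 1 := by
    rw [hwdef, div_lt_one hD0]
    rcases hne with h | h
    · nlinarith [lt_of_le_of_ne hβ (Ne.symm h)]
    · nlinarith [lt_of_le_of_ne hγ (Ne.symm h)]
  have hwe : omegaFun β γ xs = w := by
    rw [omegaFun, hwdef]
    rw [div_eq_div_iff (by linarith : (1:ℝ) - β*γ ≠ 0) hD0.ne']
    field_simp
    linear_combination (β*(γ - xs)) * hfix'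
  have habs : |omegaFun β γ xs| = w := by rw [hwe]; exact abs_of_pos hw0
  rw [habs] at hδw
  refine ⟨min (xs/2) ((β + lam * xs ^ 2) * w ^ 2 / (5 * lam * xs)),
    lt_min (by positivity) (by positivity), ?_⟩
  rintro τ ⟨hτ0, hτlt⟩ k R hR hcov x₁ hx₁ x₂ hx₂ h12
  rw [habs] at hx₁ hx₂ h12 ⊢
  have hτx : τ ≤ xs / 2 := (lt_of_lt_of_le hτlt (min_le_left _ _)).le
  have hττ : 5 * lam * xs * τ ≤ (β + lam * xs ^ 2) * w ^ 2 := by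
    have h := lt_of_lt_of_le hτlt (min_le_right _ _)
    rw [lt_div_iff₀ (by positivity)] at h
    linarith
  have hwτ : 0 < w * τ := mul_pos hw0 hτ0
  have hu1 : |x₁ - xs| ≤ w * τ / 2 := by
    rw [abs_le]; exact ⟨by linarith [hx₁.1], by linarith [hx₁.2]⟩
  have hu2 : |x₂ - xs| ≤ w * τ / 2 := by
    rw [abs_le]; exact ⟨by linarith [hx₂.1], by linarith [hx₂.2]⟩
  obtain ⟨hu1l, hu1r⟩ := abs_le.1 hu1
  have hp : xs - (x₁ - xs) / w ∈ Set.Icc (xs - τ) (xs + τ) := by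
    have h1 : (x₁ - xs) / w ≤ τ / 2 := by rw [div_le_iff₀ hw0]; linarith
    have h2 : -(τ / 2) ≤ (x₁ - xs) / w := by rw [le_div_iff₀ hw0]; linarith
    exact ⟨by linarith, by linarith⟩
  obtain ⟨i, hpi⟩ := hcov _ hp
  have hwc : w * ((x₁ - xs) / w) = x₁ - xs := by field_simp
  have hkey1 : |w * (R i - xs) + (x₁ - xs)| ≤ w * (τ * δ) := by
    have heq : w * (R i - xs) + (x₁ - xs) = -(w * (xs - (x₁ - xs) / w - R i)) := by
      linear_combination -hwc
    rw [heq, abs_neg, abs_mul, abs_of_pos hw0]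
    exact mul_le_mul_of_nonneg_left hpi hw0.le
  have hkey2 : |w * (R i - xs) + (x₂ - xs)| ≤ w * (τ * δ) + w * τ * δ / 2 := by
    have heq : w * (R i - xs) + (x₂ - xs) = (w * (R i - xs) + (x₁ - xs)) + (x₂ - x₁) := by
      ring
    rw [heq]
    refine le_trans (abs_add_le _ _) ?_
    have h21 : |x₂ - x₁| ≤ w * τ * δ / 2 := by rw [abs_sub_comm]; exact h12
    linarith
  have hbig : w * (τ * δ) + w * τ * δ / 2 ≤ (3/200) * w ^ 2 * τ := by
    linarith [mul_nonneg hwτ.le (by linarith : (0:ℝ) ≤ w / 100 - δ)]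
  have hs : |R i - xs| ≤ τ := by
    rw [abs_le]; exact ⟨by linarith [(hR i).1], by linarith [(hR i).2]⟩
  have hr0 : 0 < R i := by
    have := (abs_le.1 hs).1; linarith
  have ha0 : 0 < xs - w * τ / 2 := by
    linarith [mul_nonneg hτ0.le (by linarith : (0:ℝ) ≤ 1 - w)]
  have hb0 : 0 < xs + w * τ / 2 := by linarith
  have hab : xs - w * τ / 2 ≤ xs + w * τ / 2 := by linarith
  have hcont : ContinuousOn (phiMap β γ lam (R i))
      (Set.Icc (xs - w * τ / 2) (xs + w * τ / 2)) := by
    show ContinuousOn (fun y => (1 + γ * lam * (R i * y)) / (β + lam * (R i * y))) _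
    apply ContinuousOn.div
    · exact Continuous.continuousOn (by fun_prop)
    · exact Continuous.continuousOn (by fun_prop)
    · intro y hy
      have hy0 : 0 < y := lt_of_lt_of_le ha0 hy.1
      have : 0 < β + lam * (R i * y) := by
        have := mul_pos hlam (mul_pos hr0 hy0); linarith
      exact this.ne'
  have main : ∀ x : ℝ, |x - xs| ≤ w * τ / 2 →
      |w * (R i - xs) + (x - xs)| ≤ (3/200) * w ^ 2 * τ →
      x ∈ phiMap β γ lam (R i) '' Set.Icc (xs - w * τ / 2) (xs + w * τ / 2) := by
    intro x hx hsx
    have hA := coreA β γ lam xs w τ (w * τ / 2) (R i) (x - xs) hβ hγ hlam hxs hγx hwD hw0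
      hw1 hτ0 hτx hττ rfl hs hx hsx
    have hB := coreB β γ lam xs w τ (w * τ / 2) (R i) (x - xs) hβ hγ hlam hxs hγx hwD hw0
      hw1 hτ0 hτx hττ rfl hs hx hsx
    have hDa : 0 < β + lam * (R i * (xs - w * τ / 2)) := by
      have := mul_pos hlam (mul_pos hr0 ha0); linarith
    have hDb : 0 < β + lam * (R i * (xs + w * τ / 2)) := by
      have := mul_pos hlam (mul_pos hr0 hb0); linarith
    have hφa : phiMap β γ lam (R i) (xs - w * τ / 2) =
        xs + lam * (xs - γ) * (xs ^ 2 - R i * (xs - w * τ / 2)) /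
          (β + lam * (R i * (xs - w * τ / 2))) := by
      rw [phiMap, div_eq_iff hDa.ne', add_mul, div_mul_cancel₀ _ hDa.ne']
      linear_combination -hfix'
    have hφb : phiMap β γ lam (R i) (xs + w * τ / 2) =
        xs + lam * (xs - γ) * (xs ^ 2 - R i * (xs + w * τ / 2)) /
          (β + lam * (R i * (xs + w * τ / 2))) := by
      rw [phiMap, div_eq_iff hDb.ne', add_mul, div_mul_cancel₀ _ hDb.ne']
      linear_combination -hfix'
    have hxa : x ≤ phiMap β γ lam (R i) (xs - w * τ / 2) := by
      rw [hφa]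
      have h2 : x - xs ≤ lam * (xs - γ) * (xs ^ 2 - R i * (xs - w * τ / 2)) /
          (β + lam * (R i * (xs - w * τ / 2))) := by
        rw [le_div_iff₀ hDa]; exact hA
      linarith
    have hxb : phiMap β γ lam (R i) (xs + w * τ / 2) ≤ x := by
      rw [hφb]
      have h2 : lam * (xs - γ) * (xs ^ 2 - R i * (xs + w * τ / 2)) /
          (β + lam * (R i * (xs + w * τ / 2))) ≤ x - xs := by
        rw [div_le_iff₀ hDb]; exact hB
      linarith
    exact intermediate_value_Icc' hab hcont ⟨hxb, hxa⟩
  refine ⟨i, main x₁ hu1 (le_trans hkey1 (by linarith [hbig, mul_nonneg (mul_nonneg hw0.le hτ0.le) hδ0.le])), main x₂ hu2 (le_trans hkey2 hbig)⟩
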